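/- Let f : ℝ → ℝ be three times differentiable on (0,∞) with f'(u) ≠ 0 and f''(u) ≠ 0 for all u > 0, and set B(u) = (1/(2f''(u)))·((f'(u) + u f''(u))/(u f'(u)) − f'''(u)/f''(u)). There do not exist real numbers λ ≠ 0 and μ ≠ 0 such that B(u) − 1/f'(u) = λ u and B(u) f'(u) + 1 = μ f(u) hold for all u > 0. -/

import Mathlib

/-- The auxiliary function
`B(u) = (1/(2f''(u)))·((f'(u) + u f''(u))/(u f'(u)) − f'''(u)/f''(u))`. -/
noncomputable def Bfun (f : ℝ → ℝ) (u : ℝ) : ℝ :=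
  (1 / (2 * deriv (deriv f) u)) *
    ((deriv f u + u * deriv (deriv f) u) / (u * deriv f u) -
      deriv (deriv (deriv f)) u / deriv (deriv f) u)

/-- For `f` three times differentiable on `(0,∞)` with `f' ≠ 0`, `f'' ≠ 0`, there do not
exist nonzero reals `λ, μ` with `B(u) − 1/f'(u) = λu` and `B(u) f'(u) + 1 = μ f(u)` on
`(0,∞)` (Case 4 of the classification by the second-fundamental-form Laplacian). -/
theorem lapII_eigen_case4_impossible
    (f : ℝ → ℝ)
    (hf : ∀ u ∈ Set.Ioi (0 : ℝ), DifferentiableAt ℝ f u)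
    (hf' : ∀ u ∈ Set.Ioi (0 : ℝ), DifferentiableAt ℝ (deriv f) u)
    (hf'' : ∀ u ∈ Set.Ioi (0 : ℝ), DifferentiableAt ℝ (deriv (deriv f)) u)
    (h1 : ∀ u ∈ Set.Ioi (0 : ℝ), deriv f u ≠ 0)
    (h2 : ∀ u ∈ Set.Ioi (0 : ℝ), deriv (deriv f) u ≠ 0) :
    ¬ ∃ lam mu : ℝ, lam ≠ 0 ∧ mu ≠ 0 ∧
      (∀ u ∈ Set.Ioi (0 : ℝ), Bfun f u - 1 / deriv f u = lam * u) ∧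
      (∀ u ∈ Set.Ioi (0 : ℝ), Bfun f u * deriv f u + 1 = mu * f u) := by
  rintro ⟨lam, mu, hlam, hmu, heq1, heq2⟩
  -- Step A : μ f = λ u f' + 2 on Ioi 0
  have hA : ∀ u ∈ Set.Ioi (0:ℝ), mu * f u = lam * u * deriv f u + 2 := by
    intro u hu
    have ha := h1 u hu
    have e1 := heq1 u hu
    have e2 := heq2 u hu
    have hB : Bfun f u = lam * u + 1 / deriv f u := by linarith
    rw [hB] at e2
    field_simp at e2
    linarith [e2]
  -- E1 : μ f' = λ f' + λ u f'' on Ioi 0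
  have hE1 : ∀ u ∈ Set.Ioi (0:ℝ), mu * deriv f u
      = lam * deriv f u + lam * (u * deriv (deriv f) u) := by
    intro u hu
    have hev : (fun u => mu * f u) =ᶠ[nhds u]
        (fun u => lam * u * deriv f u + 2) :=
      Filter.eventuallyEq_of_mem (isOpen_Ioi.mem_nhds hu) hA
    have hL : HasDerivAt (fun u => mu * f u) (mu * deriv f u) u :=
      ((hf u hu).hasDerivAt).const_mul mu
    have hR : HasDerivAt (fun u => lam * u * deriv f u + 2)
        (lam * (1 * deriv f u + u * deriv (deriv f) u)) u := by
      have h0 : HasDerivAt (fun u : ℝ => u * deriv f u)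
          (1 * deriv f u + u * deriv (deriv f) u) u :=
        (hasDerivAt_id u).mul (hf' u hu).hasDerivAt
      simpa [mul_assoc] using (h0.const_mul lam).add_const 2
    have h := hL.deriv ▸ hR.deriv ▸ hev.deriv_eq
    linear_combination h
  -- E2 : μ f'' = 2λ f'' + λ u f''' on Ioi 0
  have hE2 : ∀ u ∈ Set.Ioi (0:ℝ), mu * deriv (deriv f) u
      = 2 * lam * deriv (deriv f) u + lam * (u * deriv (deriv (deriv f)) u) := by
    intro u hu
    have hev : (fun u => mu * deriv f u) =ᶠ[nhds u]
        (fun u => lam * deriv f u + lam * (u * deriv (deriv f) u)) :=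
      Filter.eventuallyEq_of_mem (isOpen_Ioi.mem_nhds hu) hE1
    have hL : HasDerivAt (fun u => mu * deriv f u) (mu * deriv (deriv f) u) u :=
      ((hf' u hu).hasDerivAt).const_mul mu
    have hR : HasDerivAt (fun u => lam * deriv f u + lam * (u * deriv (deriv f) u))
        (lam * deriv (deriv f) u
          + lam * (1 * deriv (deriv f) u + u * deriv (deriv (deriv f)) u)) u := by
      have h0 : HasDerivAt (fun u : ℝ => u * deriv (deriv f) u)
          (1 * deriv (deriv f) u + u * deriv (deriv (deriv f)) u) u :=
        (hasDerivAt_id u).mul (hf'' u hu).hasDerivAt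
      exact (((hf' u hu).hasDerivAt).const_mul lam).add (h0.const_mul lam)
    have h := hL.deriv ▸ hR.deriv ▸ hev.deriv_eq
    linear_combination h
  -- key pointwise equation : 2λ - μ = (μ-λ) u f'
  have hkey : ∀ u ∈ Set.Ioi (0:ℝ),
      2 * lam - mu = lam * (mu - lam) * u * deriv f u := by
    intro u hu
    have hu0 : (0:ℝ) < u := hu
    have ha := h1 u hu
    have hb := h2 u hu
    have e1 := heq1 u hu
    have g1 := hE1 u hu
    have g2 := hE2 u hu
    rw [Bfun] at e1
    field_simp at e1
    have hK : (2 * lam * (deriv f u)^2 * deriv (deriv f) u) ≠ 0 :=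
      mul_ne_zero (mul_ne_zero (mul_ne_zero two_ne_zero hlam) (pow_ne_zero 2 ha)) hb
    refine mul_left_cancel₀ hK ?_
    linear_combination lam^2 * deriv f u * e1
      - (lam * deriv f u * deriv (deriv f) u
          + 2 * lam^2 * u * (deriv f u)^2 * deriv (deriv f) u) * g1
      - (lam * (deriv f u)^2) * g2
  have h1m : (1:ℝ) ∈ Set.Ioi (0:ℝ) := by norm_num
  -- μ ≠ λ
  have hml : mu - lam ≠ 0 := by
    intro h
    apply hlam
    have hk := hkey 1 h1m
    linear_combination hk + lam * deriv f 1 * h + h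
  -- f is constant on Ioi 0
  set K : ℝ := ((2*lam - mu) + 2*(mu - lam)) / (mu * (mu - lam)) with hKdef
  have hC : ∀ u ∈ Set.Ioi (0:ℝ), f u = K := by
    intro u hu
    have hk := hkey u hu
    have ha := hA u hu
    rw [hKdef]
    field_simp
    linear_combination (mu - lam) * ha - hk
  have hev : f =ᶠ[nhds (1:ℝ)] fun _ => K :=
    Filter.eventuallyEq_of_mem (isOpen_Ioi.mem_nhds h1m) hC
  have : deriv f 1 = 0 := by
    rw [hev.deriv_eq]; simp
  exact h1 1 h1m this
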